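/- Let T = {(τ, x, z) ∈ ℝ × ℝ^d × Z : h(aᵀx) ≤ τ and x_i(1 − z_i) = 0 for all i ∈ [d]}, where Z ⊆ {0,1}^d with Z ≠ {0}, the graph G_Z is connected, a ∈ ℝ^d has a_i ≠ 0 for all i, and h : ℝ → ℝ ∪ {+∞} is proper, lower semicontinuous, convex with h(0) = 0. Then for every (τ, x, z) in the closed convex hull of T and every x̄ ∈ ℝ^d with aᵀx̄ = 0, the point (τ, x + x̄, z) also lies in the closed convex hull of T. -/

import Mathlib

open scoped Classical

/-- The graph `G_Z` on `[d]` associated with `Z ⊆ {0,1}^d`: `i ∼ j` iff `i ≠ j` and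
some `z ∈ Z` has `z i = z j = 1`. -/
def graphOfZ {d : ℕ} (Z : Set (Fin d → ℝ)) : SimpleGraph (Fin d) :=
  SimpleGraph.fromRel (fun i j => ∃ z ∈ Z, z i = 1 ∧ z j = 1)

/-- Recessive directions of `cl conv(T)` in the connected-graph, unsigned case:
adding any `x̄` with `aᵀx̄ = 0` stays in `cl conv(T)`. -/
theorem clconv_T_recession {d : ℕ}
    (Z : Set (Fin d → ℝ)) (hZ01 : ∀ z ∈ Z, ∀ i, z i = 0 ∨ z i = 1)
    (hZne : Z ≠ {0}) (hconn : (graphOfZ Z).Connected)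
    (a : Fin d → ℝ) (ha : ∀ i, a i ≠ 0)
    (h : ℝ → EReal)
    (hbot : ∀ x : ℝ, h x ≠ ⊥) (hnetop : ∃ x : ℝ, h x ≠ ⊤)
    (hlsc : LowerSemicontinuous h)
    (hconv : Convex ℝ {u : ℝ × ℝ | h u.2 ≤ (u.1 : EReal)})
    (h0 : h 0 = 0) :
    ∀ p ∈ closure (convexHull ℝ
      {p : ℝ × (Fin d → ℝ) × (Fin d → ℝ) |
        p.2.2 ∈ Z ∧ h (∑ i, a i * p.2.1 i) ≤ (p.1 : EReal) ∧
        ∀ i, p.2.1 i * (1 - p.2.2 i) = 0}),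
    ∀ xbar : Fin d → ℝ, (∑ i, a i * xbar i) = 0 →
      (p.1, p.2.1 + xbar, p.2.2) ∈ closure (convexHull ℝ
        {p : ℝ × (Fin d → ℝ) × (Fin d → ℝ) |
          p.2.2 ∈ Z ∧ h (∑ i, a i * p.2.1 i) ≤ (p.1 : EReal) ∧
          ∀ i, p.2.1 i * (1 - p.2.2 i) = 0}) := by
  classical
  set T : Set (ℝ × (Fin d → ℝ) × (Fin d → ℝ)) :=
    {p : ℝ × (Fin d → ℝ) × (Fin d → ℝ) |
      p.2.2 ∈ Z ∧ h (∑ i, a i * p.2.1 i) ≤ (p.1 : EReal) ∧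
      ∀ i, p.2.1 i * (1 - p.2.2 i) = 0} with hTdef
  set C : Set (ℝ × (Fin d → ℝ) × (Fin d → ℝ)) := closure (convexHull ℝ T) with hCdef
  -- The set of "recessive" directions
  set M : Set (Fin d → ℝ) :=
    {w | ∀ q ∈ C, ((q.1, q.2.1 + w, q.2.2) : ℝ × (Fin d → ℝ) × (Fin d → ℝ)) ∈ C} with hMdef
  have hM0 : (0 : Fin d → ℝ) ∈ M := by
    intro q hq; simpa using hq
  have hMadd : ∀ w1 ∈ M, ∀ w2 ∈ M, w1 + w2 ∈ M := by
    intro w1 h1 w2 h2 q hq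
    have := h2 _ (h1 q hq)
    simpa [add_assoc] using this
  -- any vector supported on an "edge" with aᵀw = 0 is in M
  have hgood : ∀ (w : Fin d → ℝ) (i j : Fin d), (∃ z ∈ Z, z i = 1 ∧ z j = 1) →
      (∀ k, w k ≠ 0 → k = i ∨ k = j) → (∑ k, a k * w k) = 0 → w ∈ M := by
    intro w i j hzex hsupp hsum
    obtain ⟨z, hz, hzi, hzj⟩ := hzex
    -- the ray points in T
    have hray : ∀ t : ℝ, (((0:ℝ), t • w, z) : ℝ × (Fin d → ℝ) × (Fin d → ℝ)) ∈ T := by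
      intro t
      refine ⟨hz, ?_, ?_⟩
      · have hs : (∑ k, a k * (t • w) k) = t * ∑ k, a k * w k := by
          rw [Finset.mul_sum]
          refine Finset.sum_congr rfl fun k _ => ?_
          simp [Pi.smul_apply, smul_eq_mul]; ring
        rw [hs, hsum, mul_zero, h0]
        simp
      · intro k
        by_cases hw : w k = 0
        · simp [Pi.smul_apply, hw]
        · rcases hsupp k hw with rfl | rfl
          · simp [hzi]
          · simp [hzj]
    -- step: conv T is mapped into C by the shift
    have hstep : ∀ q ∈ convexHull ℝ T,
        ((q.1, q.2.1 + w, q.2.2) : ℝ × (Fin d → ℝ) × (Fin d → ℝ)) ∈ C := by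
      intro q hq
      have ht0 : ∀ n : ℕ, (0:ℝ) < 1/((n:ℝ)+1) := by
        intro n; positivity
      have hmem : ∀ n : ℕ,
          (1 - 1/((n:ℝ)+1)) • q + (1/((n:ℝ)+1)) • (((0:ℝ), ((n:ℝ)+1) • w, z) :
            ℝ × (Fin d → ℝ) × (Fin d → ℝ)) ∈ convexHull ℝ T := by
        intro n
        have h1 : (1:ℝ)/((n:ℝ)+1) ≤ 1 := by
          rw [div_le_one (by positivity)]
          simp [Nat.cast_nonneg]
        exact (convex_convexHull ℝ T) hq (subset_convexHull ℝ T (hray ((n:ℝ)+1)))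
          (by linarith) (le_of_lt (ht0 n)) (by ring)
      have heq : ∀ n : ℕ,
          (1 - 1/((n:ℝ)+1)) • q + (1/((n:ℝ)+1)) • (((0:ℝ), ((n:ℝ)+1) • w, z) :
            ℝ × (Fin d → ℝ) × (Fin d → ℝ))
          = (1 - 1/((n:ℝ)+1)) • q + (((0:ℝ), w, (1/((n:ℝ)+1)) • z) :
            ℝ × (Fin d → ℝ) × (Fin d → ℝ)) := by
        intro n
        have hne : ((n:ℝ)+1) ≠ 0 := by positivity
        congr 1
        refine Prod.ext ?_ (Prod.ext ?_ ?_)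
        · simp
        · simp [smul_smul, one_div, inv_mul_cancel₀ hne]
        · simp
      have htend : Filter.Tendsto
          (fun n : ℕ => (1 - 1/((n:ℝ)+1)) • q + (((0:ℝ), w, (1/((n:ℝ)+1)) • z) :
            ℝ × (Fin d → ℝ) × (Fin d → ℝ)))
          Filter.atTop (nhds ((q.1, q.2.1 + w, q.2.2))) := by
        have ht : Filter.Tendsto (fun n : ℕ => 1/((n:ℝ)+1)) Filter.atTop (nhds 0) :=
          tendsto_one_div_add_atTop_nhds_zero_nat
        have h1 : Filter.Tendsto (fun n : ℕ => (1 - 1/((n:ℝ)+1)) • q)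
            Filter.atTop (nhds ((1:ℝ) • q)) := by
          have := (Filter.Tendsto.const_sub (1:ℝ) ht).smul_const q
          simpa using this
        have h2 : Filter.Tendsto
            (fun n : ℕ => (((0:ℝ), w, (1/((n:ℝ)+1)) • z) :
              ℝ × (Fin d → ℝ) × (Fin d → ℝ)))
            Filter.atTop (nhds (((0:ℝ), w, (0:ℝ) • z))) :=
          Filter.Tendsto.prodMk_nhds tendsto_const_nhds
            (Filter.Tendsto.prodMk_nhds tendsto_const_nhds (ht.smul_const z))
        have h3 := h1.add h2
        have : (1:ℝ) • q + (((0:ℝ), w, (0:ℝ) • z) : ℝ × (Fin d → ℝ) × (Fin d → ℝ))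
            = (q.1, q.2.1 + w, q.2.2) := by
          refine Prod.ext ?_ (Prod.ext ?_ ?_) <;> simp
        rwa [this] at h3
      refine mem_closure_of_tendsto htend ?_
      filter_upwards with n
      rw [← heq n]
      exact hmem n
    -- extend to the closure
    intro q hq
    have hcont : Continuous (fun q : ℝ × (Fin d → ℝ) × (Fin d → ℝ) =>
        ((q.1, q.2.1 + w, q.2.2) : ℝ × (Fin d → ℝ) × (Fin d → ℝ))) := by fun_prop
    have := map_mem_closure hcont hq hstep
    rwa [hCdef, closure_closure] at this
  -- the normalized basis vectors
  set u : Fin d → (Fin d → ℝ) := fun i k => (a i)⁻¹ * (if k = i then (1:ℝ) else 0) with hudef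
  have hu_apply : ∀ i k, u i k = (a i)⁻¹ * (if k = i then (1:ℝ) else 0) := fun i k => rfl
  -- edge directions are in M
  have hedge : ∀ (c : ℝ) (i j : Fin d), (graphOfZ Z).Adj i j → c • (u i - u j) ∈ M := by
    intro c i j hadj
    rw [graphOfZ, SimpleGraph.fromRel_adj] at hadj
    obtain ⟨hne, hrel⟩ := hadj
    have hzex : ∃ z ∈ Z, z i = 1 ∧ z j = 1 := by
      rcases hrel with ⟨z, hz, h1, h2⟩ | ⟨z, hz, h1, h2⟩
      · exact ⟨z, hz, h1, h2⟩
      · exact ⟨z, hz, h2, h1⟩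
    refine hgood _ i j hzex ?_ ?_
    · intro k hk
      by_contra hcon
      push_neg at hcon
      obtain ⟨hki, hkj⟩ := hcon
      apply hk
      simp [hu_apply, hki, hkj]
    · have hs : ∀ i0 : Fin d, ∑ k, a k * u i0 k = 1 := by
        intro i0
        have he : ∀ k, a k * u i0 k = if k = i0 then a i0 * (a i0)⁻¹ else 0 := by
          intro k
          rw [hu_apply]
          by_cases hk : k = i0 <;> simp [hk]
        rw [Finset.sum_congr rfl fun k _ => he k, Finset.sum_ite_eq',
          if_pos (Finset.mem_univ i0), mul_inv_cancel₀ (ha i0)]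
      calc ∑ k, a k * (c • (u i - u j)) k
          = ∑ k, (c * (a k * u i k) - c * (a k * u j k)) := by
            refine Finset.sum_congr rfl fun k _ => ?_
            simp only [Pi.smul_apply, Pi.sub_apply, smul_eq_mul]; ring
        _ = (∑ k, c * (a k * u i k)) - ∑ k, c * (a k * u j k) :=
            Finset.sum_sub_distrib _ _
        _ = c * (∑ k, a k * u i k) - c * ∑ k, a k * u j k := by
            rw [← Finset.mul_sum, ← Finset.mul_sum]
        _ = 0 := by rw [hs i, hs j]; ring
    -- walks give telescoping sums in M
  have hwalk : ∀ (i j : Fin d) (W : (graphOfZ Z).Walk i j) (c : ℝ),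
      c • (u i - u j) ∈ M := by
    intro i j W
    induction W with
    | nil => intro c; simpa using hM0
    | @cons i k j hadj W ih =>
      intro c
      have heq : c • (u i - u j) = c • (u i - u k) + c • (u k - u j) := by
        rw [← smul_add]; congr 1; abel
      rw [heq]
      exact hMadd _ (hedge c i k hadj) _ (ih c)
  -- conclusion
  intro p hp xbar hxbar
  obtain ⟨r⟩ := hconn.nonempty
  have hdecomp : xbar = ∑ j, (a j * xbar j) • (u j - u r) := by
    funext k
    rw [Finset.sum_apply]
    have h2 : ∑ j, (a j * xbar j) * u j k = xbar k := by
      have he : ∀ j, (a j * xbar j) * u j k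
          = if j = k then (a k * xbar k) * (a k)⁻¹ else 0 := by
        intro j
        rw [hu_apply]
        by_cases hj : j = k
        · subst hj; simp
        · have : ¬ (k = j) := fun hc => hj hc.symm
          simp [this, hj]
      rw [Finset.sum_congr rfl fun j _ => he j, Finset.sum_ite_eq',
        if_pos (Finset.mem_univ k), mul_comm (a k), mul_assoc,
        mul_inv_cancel₀ (ha k), mul_one]
    have h3 : ∑ j, (a j * xbar j) * u r k = 0 := by
      rw [← Finset.sum_mul, hxbar, zero_mul]
    calc xbar k = (∑ j, (a j * xbar j) * u j k) - ∑ j, (a j * xbar j) * u r k := by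
          rw [h2, h3, sub_zero]
      _ = ∑ j, ((a j * xbar j) * u j k - (a j * xbar j) * u r k) :=
          (Finset.sum_sub_distrib _ _).symm
      _ = ∑ j, ((a j * xbar j) • (u j - u r)) k := by
          refine Finset.sum_congr rfl fun j _ => ?_
          simp only [Pi.smul_apply, Pi.sub_apply, smul_eq_mul]; ring
  have hxM : xbar ∈ M := by
    rw [hdecomp]
    refine Finset.sum_induction _ (· ∈ M) (fun x y hx hy => hMadd x hx y hy) hM0 ?_
    intro j _
    obtain ⟨W⟩ := hconn.preconnected j r
    exact hwalk j r W (a j * xbar j)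
  exact hxM p hp
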